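/- The Dirichlet series of the squarefree indicator satisfies ∑_{n=1}^∞ μ(n)²/nˢ = ζ(s)/ζ(2s) for every real s > 1. -/
import Mathlib

open ArithmeticFunction Complex in
lemma sq_decomp_unique {a b a' b' : ℕ} (ha : Squarefree a) (ha' : Squarefree a')
    (hb : b ≠ 0) (hb' : b' ≠ 0) (h : a * b ^ 2 = a' * b' ^ 2) : a = a' ∧ b = b' := by
  have ha0 := ha.ne_zero
  have ha0' := ha'.ne_zero
  have hfa := (Nat.squarefree_iff_factorization_le_one ha0).mp ha
  have hfa' := (Nat.squarefree_iff_factorization_le_one ha0').mp ha'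
  have key : ∀ p, a.factorization p = a'.factorization p ∧
      b.factorization p = b'.factorization p := by
    intro p
    have := congrArg (fun n => Nat.factorization n p) h
    simp only [Nat.factorization_mul ha0 (pow_ne_zero 2 hb),
      Nat.factorization_mul ha0' (pow_ne_zero 2 hb'), Nat.factorization_pow,
      Finsupp.add_apply, Finsupp.smul_apply, smul_eq_mul] at this
    have h1 := hfa p
    have h2 := hfa' p
    omega
  exact ⟨Nat.eq_of_factorization_eq ha0 ha0' fun p => (key p).1,
    Nat.eq_of_factorization_eq hb hb' fun p => (key p).2⟩

theorem tsum_squarefree_eq_zeta_div (s : ℝ) (hs : 1 < s) :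
    ∑' n : ℕ, ((ArithmeticFunction.moebius n : ℂ))^2 / (n : ℂ)^(s : ℂ)
      = riemannZeta s / riemannZeta (2*s) := by
  have hs0 : s ≠ 0 := by linarith
  have hs2 : (1:ℝ) < 2*s := by linarith
  have hres : 1 < ((s : ℂ)).re := by simpa using hs
  have hres2 : 1 < ((2*(s:ℝ) : ℂ)).re := by
    simpa using hs2
  have h2s0 : (2:ℂ)*(s:ℂ) ≠ 0 := by
    simpa using hs0
  set F : ℕ → ℂ := fun n => ((ArithmeticFunction.moebius n : ℂ))^2 / (n : ℂ)^(s : ℂ) with hF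
  set G : ℕ → ℂ := fun m => 1 / (m:ℂ)^((2:ℂ)*(s:ℂ)) with hG
  set H : ℕ → ℂ := fun N => 1 / (N:ℂ)^(s:ℂ) with hH
  have hzs : riemannZeta s = ∑' N, H N := zeta_eq_tsum_one_div_nat_cpow hres
  have hz2 : riemannZeta (2*s) = ∑' m, G m := by
    have := zeta_eq_tsum_one_div_nat_cpow (s := 2*(s:ℂ)) (by simpa using hs2)
    simpa [hG, one_div] using this
  -- norm summability
  have hnorm : ∀ (p : ℝ), 1 < p → ∀ n : ℕ, ‖(n:ℂ)^((p:ℝ):ℂ)‖ = (n:ℝ)^p := by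
    intro p hp n
    rcases Nat.eq_zero_or_pos n with rfl | hn
    · have hp0 : p ≠ 0 := by linarith
      simp [Complex.zero_cpow (show (p:ℂ) ≠ 0 by exact_mod_cast hp0), Real.zero_rpow hp0]
    · rw [Complex.norm_natCast_cpow_of_pos hn, Complex.ofReal_re]
  have hmu_le : ∀ n : ℕ, ‖((ArithmeticFunction.moebius n : ℤ) : ℂ)‖ ≤ 1 := by
    intro n
    rw [Complex.norm_intCast]
    exact_mod_cast ArithmeticFunction.abs_moebius_le_one
  have hsummF : Summable (fun n => ‖F n‖) := by
    refine Summable.of_nonneg_of_le (f := fun n : ℕ => 1 / (n:ℝ)^s)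
      (fun n => norm_nonneg _) (fun n => ?_) (Real.summable_one_div_nat_rpow.mpr hs)
    rcases Nat.eq_zero_or_pos n with rfl | hn
    · have : F 0 = 0 := by simp [hF]
      rw [this, norm_zero]
      positivity
    · rw [hF]
      simp only [norm_div, norm_pow]
      rw [hnorm s hs]
      have h1 : ‖((ArithmeticFunction.moebius n : ℤ) : ℂ)‖^2 ≤ 1 := by
        have h := hmu_le n
        nlinarith [norm_nonneg ((ArithmeticFunction.moebius n : ℤ) : ℂ)]
      gcongr
  have hsummG : Summable (fun n => ‖G n‖) := by
    refine Summable.of_nonneg_of_le (f := fun n : ℕ => 1 / (n:ℝ)^(2*s))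
      (fun n => norm_nonneg _) (fun n => ?_) (Real.summable_one_div_nat_rpow.mpr hs2)
    rw [hG]
    simp only [norm_div, norm_one]
    have h2 : ((2:ℂ)*(s:ℂ)) = (((2*s : ℝ)):ℂ) := by push_cast; ring
    rw [h2, hnorm (2*s) hs2]
  have hFsumm : Summable F := hsummF.of_norm
  have hGsumm : Summable G := hsummG.of_norm
  -- support facts
  have hGzero : G 0 = 0 := by simp [hG, Complex.zero_cpow h2s0]
  have hHzero : H 0 = 0 := by
    simp [hH, Complex.zero_cpow (show (s:ℂ) ≠ 0 by exact_mod_cast hs0)]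
  have hsupp : ∀ p : ℕ × ℕ, F p.1 * G p.2 ≠ 0 → Squarefree p.1 ∧ p.2 ≠ 0 := by
    rintro ⟨a, b⟩ h
    constructor
    · by_contra hsf
      have : ArithmeticFunction.moebius a = 0 :=
        ArithmeticFunction.moebius_eq_zero_of_not_squarefree hsf
      apply h
      simp [hF, this]
    · rintro rfl
      exact h (by simp [hGzero])
  -- key identity via bijection
  have hbij : ∑' N, H N = ∑' p : ℕ × ℕ, F p.1 * G p.2 := by
    apply tsum_eq_tsum_of_ne_zero_bij (fun x => x.1.1 * x.1.2 ^ 2)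
    · rintro ⟨⟨a, b⟩, hab⟩ ⟨⟨a', b'⟩, hab'⟩ hEq
      obtain ⟨hsa, hb⟩ := hsupp _ hab
      obtain ⟨hsa', hb'⟩ := hsupp _ hab'
      obtain ⟨h1, h2⟩ := sq_decomp_unique hsa hsa' hb hb' hEq
      simp only [Subtype.mk.injEq, Prod.mk.injEq]
      exact ⟨h1, h2⟩
    · intro N hN
      have hN0 : N ≠ 0 := by
        rintro rfl
        exact hN hHzero
      obtain ⟨a, b, ha0, hb0, hab, hsa⟩ := Nat.sq_mul_squarefree_of_pos (Nat.pos_of_ne_zero hN0)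
      have hFa : F a ≠ 0 := by
        have hmu : ArithmeticFunction.moebius a ≠ 0 :=
          ArithmeticFunction.moebius_ne_zero_iff_squarefree.mpr hsa
        apply div_ne_zero
        · exact pow_ne_zero 2 (by exact_mod_cast hmu)
        · rw [Ne, Complex.cpow_eq_zero_iff]
          rintro ⟨h, -⟩
          exact ha0.ne' (by exact_mod_cast h)
      have hGb : G b ≠ 0 := by
        apply div_ne_zero one_ne_zero
        rw [Ne, Complex.cpow_eq_zero_iff]
        rintro ⟨h, -⟩
        exact hb0.ne' (by exact_mod_cast h)
      refine ⟨⟨(a, b), ?_⟩, ?_⟩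
      · exact mul_ne_zero hFa hGb
      · simpa [mul_comm] using hab
    · rintro ⟨⟨a, b⟩, hab⟩
      obtain ⟨hsa, hb⟩ := hsupp _ hab
      have hmu2 : ((ArithmeticFunction.moebius a : ℤ) : ℂ)^2 = 1 := by
        exact_mod_cast congrArg (Int.cast : ℤ → ℂ)
          (ArithmeticFunction.moebius_sq_eq_one_of_squarefree hsa)
      simp only [hH, hF, hG, hmu2]
      have hcast : ((a * b^2 : ℕ) : ℂ) = (((a:ℝ)):ℂ) * (((b:ℝ)^2 :ℝ):ℂ) := by push_cast; ring
      rw [hcast, Complex.mul_cpow_ofReal_nonneg (by positivity) (by positivity)]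
      have hb2 : ((((b:ℝ)^2 : ℝ)):ℂ) ^ (s:ℂ) = ((b:ℝ):ℂ) ^ ((2:ℂ)*(s:ℂ)) := by
        have h2c : ((2:ℂ)*(s:ℂ)) = (((2*s : ℝ)):ℂ) := by push_cast; ring
        rw [← Complex.ofReal_cpow (by positivity), h2c,
          ← Complex.ofReal_cpow (by positivity)]
        congr 1
        rw [Real.rpow_mul (by positivity), Real.rpow_two]
      rw [hb2]
      push_cast
      ring
  have key : (∑' n, F n) * (∑' m, G m) = ∑' N, H N := by
    rw [hbij, tsum_mul_tsum_of_summable_norm hsummF hsummG]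
  have hz2ne : riemannZeta (2*s) ≠ 0 :=
    riemannZeta_ne_zero_of_one_lt_re (by simpa using hs2)
  rw [eq_div_iff hz2ne, hz2, hzs]
  exact key
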